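/- Let f : [θ/2, 3θ/4] → ℝ be absolutely continuous and nonincreasing with f(t) > 0 for all t, and suppose f(t) ≤ β·(f'(t))² almost everywhere, where β > 0. Then √(f(θ/2)) − √(f(3θ/4)) ≥ θ/(8√β). In particular, if √(f(θ/2)) < θ/(8√β), the hypotheses lead to a contradiction, so f(3θ/4) ≤ 0 must fail to be positive. -/

import Mathlib

open MeasureTheory

lemma stmt2_aux_deriv_nonpos {f : ℝ → ℝ} {a b t : ℝ}
    (hf : AntitoneOn f (Set.Icc a b)) (ht : t ∈ Set.Ioo a b)
    (hd : DifferentiableAt ℝ f t) : deriv f t ≤ 0 := by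
  have h := hd.hasDerivAt
  rw [hasDerivAt_iff_tendsto_slope] at h
  have hsub : Set.Ioi t ⊆ {t}ᶜ := fun x hx => ne_of_gt hx
  have h' := h.mono_left (nhdsWithin_mono t hsub)
  refine le_of_tendsto h' ?_
  filter_upwards [Ioo_mem_nhdsGT_of_mem ⟨le_refl t, ht.2⟩] with u hu
  have hle : f u ≤ f t :=
    hf ⟨ht.1.le, ht.2.le⟩ ⟨(ht.1.trans hu.1).le, hu.2.le⟩ hu.1.le
  have hs : slope f t u = (f u - f t) / (u - t) := slope_def_field f t u
  rw [hs]
  exact div_nonpos_of_nonpos_of_nonneg (by linarith) (by linarith [hu.1])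

lemma stmt2_aux_alg {c d m x δ : ℝ} (hc : 0 < c) (hd : 0 ≤ d) (hm : 0 < m)
    (hmx : m ≤ x) (hδ : 0 ≤ δ) (h : δ * x ≤ c * d * (2 * x + d)) :
    δ / (2 * c) - δ * d / (4 * c * m) ≤ d := by
  have hx : 0 < x := lt_of_lt_of_le hm hmx
  rw [div_sub_div _ _ (by positivity) (by positivity), div_le_iff₀ (by positivity)]
  rcases le_or_gt (2 * m) d with hcase | hcase
  · nlinarith [mul_nonneg (mul_nonneg hc.le hδ) (by linarith : (0:ℝ) ≤ d - 2*m),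
      mul_nonneg (mul_nonneg (mul_nonneg hc.le hc.le) hm.le) hd]
  · nlinarith [mul_le_mul_of_nonneg_right h (by linarith : (0:ℝ) ≤ 2*m - d),
      mul_nonneg (mul_nonneg (mul_nonneg hc.le hd) hd) (by linarith : (0:ℝ) ≤ 2*x - 2*m + d),
      hx, mul_pos hc hx, mul_pos (mul_pos hc hc) (mul_pos hm hx)]

lemma stmt2_main {β a b : ℝ} (hβ : 0 < β) (hab : a < b) (f : ℝ → ℝ)
    (hpos : ∀ t ∈ Set.Icc a b, 0 < f t)
    (hanti : AntitoneOn f (Set.Icc a b))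
    (hFTC : ∀ s t : ℝ, a ≤ s → s ≤ t → t ≤ b → f t - f s = ∫ u in s..t, deriv f u)
    (hineq : ∀ᵐ t ∂(volume.restrict (Set.Icc a b)),
      f t ≤ β * (deriv f t) ^ 2) :
    (b - a) / (2 * Real.sqrt β) ≤ Real.sqrt (f a) - Real.sqrt (f b) := by
  have hc : 0 < Real.sqrt β := Real.sqrt_pos.mpr hβ
  set c := Real.sqrt β with hcdef
  have hfb : 0 < f b := hpos b ⟨hab.le, le_refl b⟩
  set X : ℝ → ℝ := fun s => Real.sqrt (f s) with hX
  have hm : 0 < X b := Real.sqrt_pos.mpr hfb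
  have hXanti : ∀ s t, s ∈ Set.Icc a b → t ∈ Set.Icc a b → s ≤ t → X t ≤ X s :=
    fun s t hs ht hst => Real.sqrt_le_sqrt (hanti hs ht hst)
  -- a.e. key derivative bound
  have key : ∀ᵐ t ∂(volume.restrict (Set.Icc a b)),
      t ∈ Set.Ioo a b → deriv f t ≤ -(X t / c) := by
    filter_upwards [hineq] with t hineqt htIoo
    have htIcc : t ∈ Set.Icc a b := Set.Ioo_subset_Icc_self htIoo
    have hft : 0 < f t := hpos t htIcc
    have hdiff : DifferentiableAt ℝ f t := by
      by_contra hnd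
      rw [deriv_zero_of_not_differentiableAt hnd] at hineqt
      nlinarith
    have hder_nonpos : deriv f t ≤ 0 := stmt2_aux_deriv_nonpos hanti htIoo hdiff
    have hq0 : 0 ≤ X t / c := div_nonneg (Real.sqrt_nonneg _) hc.le
    have hq2 : β * (X t / c) ^ 2 = f t := by
      rw [div_pow, hX]
      simp only []
      rw [Real.sq_sqrt hft.le, hcdef, Real.sq_sqrt hβ.le]
      field_simp
    have hqpos : 0 < X t / c := div_pos (Real.sqrt_pos.mpr hft) hc
    by_contra hcon
    push_neg at hcon
    have h1 : 0 < deriv f t + X t / c := by linarith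
    have h2 : 0 < X t / c - deriv f t := by linarith
    nlinarith [mul_pos h1 h2, mul_pos hβ (mul_pos h1 h2), hq2, hineqt]
  -- interval integrability of the derivative
  have hInt : IntervalIntegrable (deriv f) volume a b := by
    by_contra hni
    have h0 : f b - f a = 0 := by
      rw [hFTC a b le_rfl hab.le le_rfl, intervalIntegral.integral_undef hni]
    have hconst : ∀ t ∈ Set.Icc a b, f t = f a := by
      intro t ht
      have h1 := hanti ⟨le_rfl, hab.le⟩ ht ht.1
      have h2 := hanti ht ⟨hab.le, le_rfl⟩ ht.2
      linarith
    have hderiv0 : ∀ t ∈ Set.Ioo a b, deriv f t = 0 := by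
      intro t ht
      have hev : f =ᶠ[nhds t] fun _ => f a := by
        filter_upwards [Ioo_mem_nhds ht.1 ht.2] with u hu
        exact hconst u (Set.Ioo_subset_Icc_self hu)
      rw [hev.deriv_eq]
      exact deriv_const t (f a)
    have hae : ∀ᵐ t ∂(volume.restrict (Set.Ioo a b)), False := by
      have h1 := ae_restrict_of_ae_restrict_of_subset Set.Ioo_subset_Icc_self key
      have h2 := ae_restrict_mem (μ := volume) (measurableSet_Ioo : MeasurableSet (Set.Ioo a b))
      filter_upwards [h1, h2] with t h1t h2t
      have hd := h1t h2t
      rw [hderiv0 t h2t] at hd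
      have hft := hpos t (Set.Ioo_subset_Icc_self h2t)
      have hxpos : 0 < X t / c := div_pos (Real.sqrt_pos.mpr hft) hc
      linarith
    rw [Filter.eventually_false_iff_eq_bot, ae_eq_bot] at hae
    have hv : volume (Set.Ioo a b) = 0 := by
      rw [← Measure.restrict_apply_self, hae]; simp
    rw [Real.volume_Ioo, ENNReal.ofReal_eq_zero] at hv
    linarith
  -- integrated estimate on subintervals
  have hkey : ∀ s t : ℝ, a ≤ s → s ≤ t → t ≤ b →
      (t - s) * (X t / c) ≤ f s - f t := by
    intro s t has hst htb
    have hi : IntervalIntegrable (deriv f) volume s t := by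
      refine hInt.mono_set ?_
      rw [Set.uIcc_of_le hst, Set.uIcc_of_le hab.le]
      exact Set.Icc_subset_Icc has htb
    have hftc := hFTC s t has hst htb
    have hne : ∀ᵐ u : ℝ ∂volume, u ≠ a ∧ u ≠ b := by
      have h1 : ∀ᵐ u : ℝ ∂volume, u ≠ a := by
        rw [ae_iff]
        have : {u : ℝ | ¬u ≠ a} = {a} := by ext u; simp
        rw [this]; exact measure_singleton a
      have h2 : ∀ᵐ u : ℝ ∂volume, u ≠ b := by
        rw [ae_iff]
        have : {u : ℝ | ¬u ≠ b} = {b} := by ext u; simp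
        rw [this]; exact measure_singleton b
      exact h1.and h2
    have hmono : (fun _ : ℝ => X t / c) ≤ᵐ[volume.restrict (Set.Icc s t)]
        fun u => -(deriv f u) := by
      have h1 := ae_restrict_of_ae_restrict_of_subset (Set.Icc_subset_Icc has htb) key
      have h2 := ae_restrict_mem (μ := volume) (measurableSet_Icc : MeasurableSet (Set.Icc s t))
      have h3 := ae_restrict_of_ae (μ := volume) (s := Set.Icc s t) hne
      filter_upwards [h1, h2, h3] with u h1u h2u h3u
      have huIoo : u ∈ Set.Ioo a b :=
        ⟨lt_of_le_of_ne (has.trans h2u.1) (Ne.symm h3u.1),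
         lt_of_le_of_ne (h2u.2.trans htb) h3u.2⟩
      have hder := h1u huIoo
      have hXle : X t ≤ X u :=
        hXanti u t (Set.Ioo_subset_Icc_self huIoo) ⟨has.trans hst, htb⟩ h2u.2
      have : X t / c ≤ X u / c := by gcongr
      linarith
    have hcomp := intervalIntegral.integral_mono_ae_restrict hst
      (intervalIntegrable_const) hi.neg hmono
    simp only [Pi.neg_apply] at hcomp
    rw [intervalIntegral.integral_const, intervalIntegral.integral_neg, smul_eq_mul] at hcomp
    linarith [hcomp, hftc]
  -- discretized telescoping bound
  have hstep : ∀ n : ℕ, 0 < n →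
      (b - a) / (2 * c) - ((b - a) / n) * (X a - X b) / (4 * c * X b) ≤ X a - X b := by
    intro n hn
    have hn' : (0 : ℝ) < n := Nat.cast_pos.mpr hn
    set δ := (b - a) / n with hδdef
    have hδpos : 0 < δ := div_pos (by linarith) hn'
    set s : ℕ → ℝ := fun i => a + i * δ with hsdef
    have hs0 : s 0 = a := by simp [hsdef]
    have hsn : s n = b := by
      rw [hsdef]; simp only []; rw [hδdef]; field_simp; ring
    have hsmono : ∀ i : ℕ, s i ≤ s (i + 1) := by
      intro i
      simp only [hsdef]
      push_cast
      nlinarith [hδpos]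
    have hsrange : ∀ i : ℕ, i ≤ n → a ≤ s i ∧ s i ≤ b := by
      intro i hi
      constructor
      · simp only [hsdef]; nlinarith [Nat.cast_nonneg (α := ℝ) i, hδpos.le]
      · have : (i : ℝ) ≤ n := Nat.cast_le.mpr hi
        simp only [hsdef]
        have hδn : (n : ℝ) * δ = b - a := by rw [hδdef]; field_simp
        nlinarith [hδpos.le]
    have hterm : ∀ i ∈ Finset.range n,
        δ / (2 * c) - δ * (X (s i) - X (s (i + 1))) / (4 * c * X b)
          ≤ X (s i) - X (s (i + 1)) := by
      intro i hi
      have hi' := Finset.mem_range.mp hi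
      have h1 : a ≤ s i := (hsrange i hi'.le).1
      have h2 : s (i + 1) ≤ b := (hsrange (i + 1) hi').2
      have h3 : s i ≤ s (i + 1) := hsmono i
      have hkey' := hkey (s i) (s (i + 1)) h1 h3 h2
      have hdiff : s (i + 1) - s i = δ := by
        simp only [hsdef]; push_cast; ring
      rw [hdiff] at hkey'
      have hiIcc : s i ∈ Set.Icc a b := ⟨h1, h3.trans h2⟩
      have hi1Icc : s (i + 1) ∈ Set.Icc a b := ⟨h1.trans h3, h2⟩
      have hfi : f (s i) = X (s i) ^ 2 := (Real.sq_sqrt (hpos _ hiIcc).le).symm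
      have hfi1 : f (s (i + 1)) = X (s (i + 1)) ^ 2 := (Real.sq_sqrt (hpos _ hi1Icc).le).symm
      have hd : 0 ≤ X (s i) - X (s (i + 1)) :=
        sub_nonneg.mpr (hXanti _ _ hiIcc hi1Icc h3)
      have hmx : X b ≤ X (s (i + 1)) := hXanti _ _ hi1Icc ⟨hab.le, le_rfl⟩ h2
      refine stmt2_aux_alg hc hd hm hmx hδpos.le ?_
      have h' : δ * X (s (i + 1)) / c ≤ X (s i) ^ 2 - X (s (i + 1)) ^ 2 := by
        rw [mul_div_assoc]
        calc δ * (X (s (i + 1)) / c) ≤ f (s i) - f (s (i + 1)) := hkey'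
          _ = X (s i) ^ 2 - X (s (i + 1)) ^ 2 := by rw [hfi, hfi1]
      rw [div_le_iff₀ hc] at h'
      nlinarith [h']
    have hsum := Finset.sum_le_sum hterm
    rw [Finset.sum_range_sub' (fun i => X (s i)), hs0, hsn] at hsum
    have hlhs : ∑ i ∈ Finset.range n,
        (δ / (2 * c) - δ * (X (s i) - X (s (i + 1))) / (4 * c * X b))
        = (n : ℝ) * (δ / (2 * c)) - (δ / (4 * c * X b)) * (X a - X b) := by
      rw [Finset.sum_sub_distrib, Finset.sum_const, Finset.card_range, nsmul_eq_mul]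
      congr 1
      calc ∑ i ∈ Finset.range n, δ * (X (s i) - X (s (i + 1))) / (4 * c * X b)
          = ∑ i ∈ Finset.range n, (δ / (4 * c * X b)) * (X (s i) - X (s (i + 1))) :=
            Finset.sum_congr rfl (fun i _ => by ring)
        _ = (δ / (4 * c * X b)) * ∑ i ∈ Finset.range n, (X (s i) - X (s (i + 1))) :=
            (Finset.mul_sum _ _ _).symm
        _ = (δ / (4 * c * X b)) * (X a - X b) := by
            rw [Finset.sum_range_sub' (fun i => X (s i)), hs0, hsn]
    rw [hlhs] at hsum
    have hnδ : (n : ℝ) * (δ / (2 * c)) = (b - a) / (2 * c) := by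
      rw [hδdef]; field_simp
    rw [hnδ] at hsum
    calc (b - a) / (2 * c) - δ * (X a - X b) / (4 * c * X b)
        = (b - a) / (2 * c) - (δ / (4 * c * X b)) * (X a - X b) := by ring
      _ ≤ X a - X b := hsum
    -- pass to the limit n → ∞
  have hD0 : 0 ≤ X a - X b :=
    sub_nonneg.mpr (hXanti a b ⟨le_rfl, hab.le⟩ ⟨hab.le, le_rfl⟩ hab.le)
  set D := X a - X b with hD
  set C := (b - a) * D / (4 * c * X b) with hC
  have hC0 : 0 ≤ C := div_nonneg (mul_nonneg (by linarith) hD0) (by positivity)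
  refine le_of_forall_pos_le_add ?_
  intro ε hε
  obtain ⟨n, hn⟩ := exists_nat_gt (C / ε)
  have hn0 : 0 < n := by
    by_contra hcon
    push_neg at hcon
    interval_cases n
    simp at hn
    have : 0 ≤ C / ε := div_nonneg hC0 hε.le
    linarith
  have hst := hstep n hn0
  have hn' : (0 : ℝ) < n := Nat.cast_pos.mpr hn0
  have hrw : ((b - a) / n) * D / (4 * c * X b) = C / n := by
    rw [hC]; ring
  rw [hrw] at hst
  have hCn : C / n ≤ ε := by
    rw [div_le_iff₀ hn']
    have := (div_lt_iff₀ hε).mp hn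
    nlinarith
  linarith

/-- Let `f : [θ/2, 3θ/4] → ℝ` be absolutely continuous (encoded by the
fundamental theorem of calculus), nonincreasing, positive, and satisfy `f ≤ β·(f')²`
a.e. on the interval, with `θ, β > 0`.  Then `√(f(θ/2)) − √(f(3θ/4)) ≥ θ/(8√β)`.
In particular if `√(f(θ/2)) < θ/(8√β)` the hypotheses are contradictory. -/
theorem stmt2 (θ β : ℝ) (hθ : 0 < θ) (hβ : 0 < β) (f : ℝ → ℝ)
    (hpos : ∀ t ∈ Set.Icc (θ / 2) (3 * θ / 4), 0 < f t)
    (hanti : AntitoneOn f (Set.Icc (θ / 2) (3 * θ / 4)))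
    (hFTC : ∀ a b : ℝ, θ / 2 ≤ a → a ≤ b → b ≤ 3 * θ / 4 →
      f b - f a = ∫ t in a..b, deriv f t)
    (hineq : ∀ᵐ t ∂(volume.restrict (Set.Icc (θ / 2) (3 * θ / 4))),
      f t ≤ β * (deriv f t) ^ 2) :
    Real.sqrt (f (θ / 2)) - Real.sqrt (f (3 * θ / 4)) ≥ θ / (8 * Real.sqrt β) ∧
    (Real.sqrt (f (θ / 2)) < θ / (8 * Real.sqrt β) → False) := by
  have hc : 0 < Real.sqrt β := Real.sqrt_pos.mpr hβ
  have hab : θ / 2 < 3 * θ / 4 := by linarith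
  have hmain := stmt2_main hβ hab f hpos hanti
    (fun s t hs hst htb => hFTC s t hs hst htb) hineq
  have hcK : (3 * θ / 4 - θ / 2) / (2 * Real.sqrt β) = θ / (8 * Real.sqrt β) := by
    rw [div_eq_div_iff (by linarith) (by linarith)]; ring
  rw [hcK] at hmain
  refine ⟨hmain, fun hlt => ?_⟩
  have hXb0 : 0 ≤ Real.sqrt (f (3 * θ / 4)) := Real.sqrt_nonneg _
  linarith
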